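/- Let k, N' ≥ 1 be integers, N = k·N', R = ℤ[X]/(X^N + 1) and R' = ℤ[Y]/(Y^{N'} + 1). For P ∈ R with power-basis coordinates P_0, …, P_{N−1} ∈ ℤ and for 0 ≤ i < k, let comp_i(P) ∈ R' be the element with power-basis coordinates (P_i, P_{i+k}, P_{i+2k}, …, P_{i+(N'−1)k}); equivalently, P = Σ_{0≤i<k} comp_i(P)(X^k)·X^i. Then for all a, s ∈ R and every 0 ≤ j < k: comp_j(a·s) = Σ_{0≤i<k} comp_i(a) · comp_{(j−i) mod k}(s) · Y^{e_{i,j}} in R', where e_{i,j} = 1 if i + ((j−i) mod k) ≥ k (equivalently, if i > j) and e_{i,j} = 0 otherwise. -/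

import Mathlib

open Polynomial Finset

/-- `Rq N` is the ring `ℤ[X]/(X^N + 1)` (also used as `R' = ℤ[Y]/(Y^N' + 1)`). -/
abbrev Rq (N : ℕ) : Type := AdjoinRoot ((X : ℤ[X]) ^ N + 1)

/-- The image of the indeterminate in `ℤ[X]/(X^N + 1)`. -/
noncomputable def rx (N : ℕ) : Rq N := AdjoinRoot.root _

/-- Multiplication rule underlying the `ModDecomp` RLWE-to-MLWE conversion.
Let `N = k·N'`, `R = ℤ[X]/(X^N+1)`, `R' = ℤ[Y]/(Y^{N'}+1)`. For `P ∈ R` with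
power-basis coordinates `cP`, its `i`-th component `comp_i(P) ∈ R'` has
coordinates `cP i, cP (i+k), …, cP (i+(N'-1)k)`. Then for `a, s ∈ R` (with
coordinates `ca`, `cs`, and `cp` the coordinates of `a·s`) and `0 ≤ j < k`:
`comp_j(a·s) = ∑_{i<k} comp_i(a) · comp_{(j-i) mod k}(s) · Y^{e_{i,j}}`
where `e_{i,j} = 1` if `i + ((j-i) mod k) ≥ k` and `e_{i,j} = 0` otherwise. -/

lemma rx_pow_self (N : ℕ) : rx N ^ N = -1 := by
  have h := AdjoinRoot.eval₂_root ((X : ℤ[X]) ^ N + 1)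
  simp only [eval₂_add, eval₂_pow, eval₂_X, eval₂_one] at h
  rw [rx]; linear_combination h

lemma sum_range_mul_split {M : Type*} [AddCommMonoid M] (k : ℕ) (f : ℕ → M) :
    ∀ N' : ℕ, ∑ m ∈ Finset.range (k * N'), f m
      = ∑ j ∈ Finset.range k, ∑ l ∈ Finset.range N', f (j + l * k) := by
  intro N'
  induction N' with
  | zero => simp
  | succ n ih =>
    have : k * (n + 1) = k * n + k := by ring
    rw [this, Finset.sum_range_add, ih, ← Finset.sum_add_distrib]
    refine Finset.sum_congr rfl fun j hj => ?_
    rw [Finset.sum_range_succ]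
    congr 1
    congr 1
    ring

lemma coords_zero (N : ℕ) (hN : 0 < N) (c : ℕ → ℤ)
    (h : ∑ m ∈ Finset.range N, c m • rx N ^ m = 0) : ∀ m < N, c m = 0 := by
  have hm : ((X : ℤ[X]) ^ N + 1).Monic := monic_X_pow_add_C 1 hN.ne'
  have pb := AdjoinRoot.powerBasis' hm
  have hdim : ((X : ℤ[X]) ^ N + 1).natDegree = N := by
    simpa using (natDegree_X_pow_add_C (n := N) (r := (1:ℤ)))
  have hb : ∀ i : Fin ((X : ℤ[X]) ^ N + 1).natDegree,
      (AdjoinRoot.powerBasis' hm).basis i = rx N ^ (i : ℕ) := by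
    intro i
    rw [show (AdjoinRoot.powerBasis' hm).basis i = _ from (AdjoinRoot.powerBasis' hm).basis_eq_pow i]
    rfl
  have hli := (AdjoinRoot.powerBasis' hm).basis.linearIndependent
  rw [Fintype.linearIndependent_iff] at hli
  have h0 : ∑ i : Fin ((X : ℤ[X]) ^ N + 1).natDegree,
      c i • (AdjoinRoot.powerBasis' hm).basis i = 0 := by
    simp_rw [hb]
    rw [Fin.sum_univ_eq_sum_range (fun m => c m • rx N ^ m), hdim, h]
  intro m hm'
  have := hli (fun i => c i) h0 ⟨m, by rw [AdjoinRoot.powerBasis'_dim, hdim]; omega⟩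
  simpa using this

lemma coords_eq (N : ℕ) (hN : 0 < N) (c d : ℕ → ℤ)
    (h : ∑ m ∈ Finset.range N, c m • rx N ^ m = ∑ m ∈ Finset.range N, d m • rx N ^ m) :
    ∀ m < N, c m = d m := by
  have h0 : ∑ m ∈ Finset.range N, (c m - d m) • rx N ^ m = 0 := by
    simp_rw [sub_smul, Finset.sum_sub_distrib, h, sub_self]
  intro m hm
  have := coords_zero N hN _ h0 m hm
  omega

noncomputable def phi (k N' N : ℕ) (hN : N = k * N') : Rq N' →+* Rq N :=
  AdjoinRoot.lift (algebraMap ℤ (Rq N)) (rx N ^ k) (by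
    simp only [eval₂_add, eval₂_pow, eval₂_X, eval₂_one, ← pow_mul, ← hN, rx_pow_self]
    ring)

lemma phi_rx_pow (k N' N : ℕ) (hN : N = k * N') (l : ℕ) :
    phi k N' N hN (rx N' ^ l) = rx N ^ (l * k) := by
  rw [map_pow]; unfold phi; rw [show rx N' = AdjoinRoot.root _ from rfl, AdjoinRoot.lift_root, ← pow_mul, mul_comm]

lemma mod_toNat (k i j : ℕ) (hk : 0 < k) (hi : i < k) (hj : j < k) :
    (((j : ℤ) - (i : ℤ)) % (k : ℤ)).toNat = (j + k - i) % k := by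
  rcases le_or_gt i j with h | h
  · have h1 : ((j : ℤ) - i) % k = (j : ℤ) - i := Int.emod_eq_of_lt (by omega) (by omega)
    have h2 : (j + k - i) % k = j - i := by
      have : j + k - i = (j - i) + 1 * k := by omega
      rw [this, Nat.add_mul_mod_self_right, Nat.mod_eq_of_lt (by omega)]
    omega
  · have h1 : ((j : ℤ) - i) % k = (j : ℤ) - i + k := by
      rw [← Int.add_mul_emod_self_left (b := (k:ℤ)) (c := 1)]
      rw [mul_one, Int.emod_eq_of_lt (by omega) (by omega)]
    have h2 : (j + k - i) % k = j + k - i := Nat.mod_eq_of_lt (by omega)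
    omega

lemma exists_coords (N : ℕ) (hN : 0 < N) (x : Rq N) :
    ∃ c : ℕ → ℤ, x = ∑ m ∈ Finset.range N, c m • rx N ^ m := by
  have hm : ((X : ℤ[X]) ^ N + 1).Monic := monic_X_pow_add_C 1 hN.ne'
  have hdim : ((X : ℤ[X]) ^ N + 1).natDegree = N := by
    simpa using (natDegree_X_pow_add_C (n := N) (r := (1:ℤ)))
  have hrep := (AdjoinRoot.powerBasis' hm).basis.sum_repr x
  refine ⟨fun m => if h : m < N
    then (AdjoinRoot.powerBasis' hm).basis.repr x
      ⟨m, by rw [AdjoinRoot.powerBasis'_dim, hdim]; exact h⟩ else 0, ?_⟩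
  conv_lhs => rw [← hrep]
  rw [← Fin.sum_univ_eq_sum_range]
  refine Fintype.sum_equiv (finCongr (show (AdjoinRoot.powerBasis' hm).dim = N by
    rw [AdjoinRoot.powerBasis'_dim, hdim])) _ _ fun i => ?_
  have hdN : (AdjoinRoot.powerBasis' hm).dim = N := by
    rw [AdjoinRoot.powerBasis'_dim, hdim]
  have hi : (i : ℕ) < N := lt_of_lt_of_eq i.isLt hdN
  have hb : (AdjoinRoot.powerBasis' hm).basis i = rx N ^ (i : ℕ) := by
    rw [(AdjoinRoot.powerBasis' hm).basis_eq_pow]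
    rfl
  simp only [finCongr_apply, Fin.coe_cast, dif_pos hi, hb]

lemma idx_lt (k N' N j l : ℕ) (hN : N = k * N') (hj : j < k) (hl : l < N') :
    j + l * k < N := by
  have h1 : (l + 1) * k ≤ N' * k := Nat.mul_le_mul_right _ (by omega)
  have h2 : (l + 1) * k = l * k + k := by ring
  have h3 : N' * k = N := by rw [hN]; ring
  omega

lemma phi_comp_sum (k N' N : ℕ) (hN : N = k * N') (c : ℕ → ℤ) :
    ∑ j ∈ Finset.range k,
        phi k N' N hN (∑ l ∈ Finset.range N', c (j + l * k) • rx N' ^ l) * rx N ^ j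
      = ∑ m ∈ Finset.range N, c m • rx N ^ m := by
  rw [show Finset.range N = Finset.range (k * N') from by rw [hN], sum_range_mul_split]
  refine Finset.sum_congr rfl fun j _ => ?_
  rw [map_sum, Finset.sum_mul]
  refine Finset.sum_congr rfl fun l _ => ?_
  rw [map_zsmul, phi_rx_pow, smul_mul_assoc, ← pow_add, add_comm (l * k) j]

lemma decomp_injective (k N' N : ℕ) (hk : 0 < k) (hN' : 0 < N') (hN : N = k * N')
    (L R : ℕ → Rq N')
    (h : ∑ j ∈ Finset.range k, phi k N' N hN (L j) * rx N ^ j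
       = ∑ j ∈ Finset.range k, phi k N' N hN (R j) * rx N ^ j) :
    ∀ j < k, L j = R j := by
  choose cL hcL using fun j => exists_coords N' hN' (L j)
  choose cR hcR using fun j => exists_coords N' hN' (R j)
  have key : ∀ (cc : ℕ → (ℕ → ℤ)) (j l : ℕ), j < k → l < N' →
      cc ((j + l * k) % k) ((j + l * k) / k) = cc j l := by
    intro cc j l hj hl
    rw [Nat.add_mul_mod_self_right, Nat.mod_eq_of_lt hj,
      Nat.add_mul_div_right _ _ hk, Nat.div_eq_of_lt hj, zero_add]
  have hL : ∑ j ∈ Finset.range k, phi k N' N hN (L j) * rx N ^ j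
      = ∑ m ∈ Finset.range N, (fun m => cL (m % k) (m / k)) m • rx N ^ m := by
    rw [← phi_comp_sum k N' N hN]
    refine Finset.sum_congr rfl fun j hj => ?_
    rw [hcL j]
    congr 2
    refine Finset.sum_congr rfl fun l hl => ?_
    rw [key cL j l (Finset.mem_range.mp hj) (Finset.mem_range.mp hl)]
  have hR : ∑ j ∈ Finset.range k, phi k N' N hN (R j) * rx N ^ j
      = ∑ m ∈ Finset.range N, (fun m => cR (m % k) (m / k)) m • rx N ^ m := by
    rw [← phi_comp_sum k N' N hN]
    refine Finset.sum_congr rfl fun j hj => ?_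
    rw [hcR j]
    congr 2
    refine Finset.sum_congr rfl fun l hl => ?_
    rw [key cR j l (Finset.mem_range.mp hj) (Finset.mem_range.mp hl)]
  have heq : ∑ m ∈ Finset.range N, (fun m => cL (m % k) (m / k)) m • rx N ^ m
      = ∑ m ∈ Finset.range N, (fun m => cR (m % k) (m / k)) m • rx N ^ m := by
    rw [← hL, ← hR]; exact h
  have hcd := coords_eq N (by rw [hN]; exact Nat.mul_pos hk hN') _ _ heq
  intro j hj
  rw [hcL j, hcR j]
  refine Finset.sum_congr rfl fun l hl => ?_
  have hl' := Finset.mem_range.mp hl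
  have h3 := hcd (j + l * k) (idx_lt k N' N j l hN hj hl')
  rw [← key cL j l hj hl', ← key cR j l hj hl', h3]

lemma addmod (k i i' : ℕ) (hk : 0 < k) (hi : i < k) (hi' : i' < k) :
    (i + i') % k = if k ≤ i + i' then i + i' - k else i + i' := by
  split_ifs with h
  · rw [Nat.mod_eq_sub_mod h, Nat.mod_eq_of_lt (by omega)]
  · rw [Nat.mod_eq_of_lt (by omega)]

lemma jmod (k i j : ℕ) (hk : 0 < k) (hi : i < k) (hj : j < k) :
    (j + k - i) % k = if i ≤ j then j - i else j + k - i := by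
  split_ifs with h
  · have h2 : j + k - i = (j - i) + 1 * k := by omega
    rw [h2, Nat.add_mul_mod_self_right, Nat.mod_eq_of_lt (by omega)]
  · exact Nat.mod_eq_of_lt (by omega)

lemma tau_sigma (k i i' : ℕ) (hk : 0 < k) (hi : i < k) (hi' : i' < k) :
    ((i + i') % k + k - i) % k = i' := by
  rw [addmod k i i' hk hi hi']
  split_ifs with h
  · have h2 : i + i' - k + k - i = i' := by omega
    rw [h2, Nat.mod_eq_of_lt hi']
  · have h2 : i + i' + k - i = i' + k := by omega
    rw [h2, Nat.add_mod_right, Nat.mod_eq_of_lt hi']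

lemma sigma_tau (k i j : ℕ) (hk : 0 < k) (hi : i < k) (hj : j < k) :
    (i + (j + k - i) % k) % k = j := by
  rw [jmod k i j hk hi hj]
  split_ifs with h
  · have h2 : i + (j - i) = j := by omega
    rw [h2, Nat.mod_eq_of_lt hj]
  · have h2 : i + (j + k - i) = j + k := by omega
    rw [h2, Nat.add_mod_right, Nat.mod_eq_of_lt hj]

theorem stmt15 (k N' N : ℕ) (hk : 1 ≤ k) (hN' : 1 ≤ N') (hN : N = k * N')
    (a s : Rq N) (ca cs cp : ℕ → ℤ)
    (ha : a = ∑ l ∈ Finset.range N, ca l • rx N ^ l)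
    (hs : s = ∑ l ∈ Finset.range N, cs l • rx N ^ l)
    (hp : a * s = ∑ l ∈ Finset.range N, cp l • rx N ^ l)
    (j : ℕ) (hj : j < k) :
    (∑ l ∈ Finset.range N', cp (j + l * k) • rx N' ^ l) =
      ∑ i ∈ Finset.range k,
        (∑ l ∈ Finset.range N', ca (i + l * k) • rx N' ^ l) *
        (∑ l ∈ Finset.range N',
            cs ((((j : ℤ) - (i : ℤ)) % (k : ℤ)).toNat + l * k) • rx N' ^ l) *
        rx N' ^ (if k ≤ i + (((j : ℤ) - (i : ℤ)) % (k : ℤ)).toNat then 1 else 0) := by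
  have hk0 : 0 < k := hk
  have hN'0 : 0 < N' := hN'
  have hmain : ∑ j ∈ Finset.range k,
      phi k N' N hN (∑ l ∈ Finset.range N', cp (j + l * k) • rx N' ^ l) * rx N ^ j
      = ∑ j ∈ Finset.range k,
        phi k N' N hN (∑ i ∈ Finset.range k,
          (∑ l ∈ Finset.range N', ca (i + l * k) • rx N' ^ l) *
          (∑ l ∈ Finset.range N',
              cs ((((j : ℤ) - (i : ℤ)) % (k : ℤ)).toNat + l * k) • rx N' ^ l) *
          rx N' ^ (if k ≤ i + (((j : ℤ) - (i : ℤ)) % (k : ℤ)).toNat then 1 else 0))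
          * rx N ^ j := by
    have hRHS : ∑ j ∈ Finset.range k,
        phi k N' N hN (∑ i ∈ Finset.range k,
          (∑ l ∈ Finset.range N', ca (i + l * k) • rx N' ^ l) *
          (∑ l ∈ Finset.range N',
              cs ((((j : ℤ) - (i : ℤ)) % (k : ℤ)).toNat + l * k) • rx N' ^ l) *
          rx N' ^ (if k ≤ i + (((j : ℤ) - (i : ℤ)) % (k : ℤ)).toNat then 1 else 0))
          * rx N ^ j
        = ∑ i ∈ Finset.range k, ∑ i' ∈ Finset.range k,
            (phi k N' N hN (∑ l ∈ Finset.range N', ca (i + l * k) • rx N' ^ l) * rx N ^ i) *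
            (phi k N' N hN (∑ l ∈ Finset.range N', cs (i' + l * k) • rx N' ^ l) * rx N ^ i') := by
      have step1 : ∀ jj ∈ Finset.range k,
          phi k N' N hN (∑ i ∈ Finset.range k,
            (∑ l ∈ Finset.range N', ca (i + l * k) • rx N' ^ l) *
            (∑ l ∈ Finset.range N',
                cs ((((jj : ℤ) - (i : ℤ)) % (k : ℤ)).toNat + l * k) • rx N' ^ l) *
            rx N' ^ (if k ≤ i + (((jj : ℤ) - (i : ℤ)) % (k : ℤ)).toNat then 1 else 0))
            * rx N ^ jj
          = ∑ i ∈ Finset.range k,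
              phi k N' N hN (
                (∑ l ∈ Finset.range N', ca (i + l * k) • rx N' ^ l) *
                (∑ l ∈ Finset.range N',
                    cs ((((jj : ℤ) - (i : ℤ)) % (k : ℤ)).toNat + l * k) • rx N' ^ l) *
                rx N' ^ (if k ≤ i + (((jj : ℤ) - (i : ℤ)) % (k : ℤ)).toNat then 1 else 0))
                * rx N ^ jj := by
        intro jj _
        rw [map_sum, Finset.sum_mul]
      rw [Finset.sum_congr rfl step1, Finset.sum_comm]
      refine Finset.sum_congr rfl fun i hi => ?_
      have hik := Finset.mem_range.mp hi
      refine (Finset.sum_nbij' (fun i' => (i + i') % k) (fun jj => (jj + k - i) % k)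
        (fun a _ => Finset.mem_range.mpr (Nat.mod_lt _ hk0))
        (fun a _ => Finset.mem_range.mpr (Nat.mod_lt _ hk0))
        (fun a hha => tau_sigma k i a hk0 hik (Finset.mem_range.mp hha))
        (fun a hha => sigma_tau k i a hk0 hik (Finset.mem_range.mp hha))
        (fun i' hi' => ?_)).symm
      have hik' := Finset.mem_range.mp hi'
      have hjlt : (i + i') % k < k := Nat.mod_lt _ hk0
      have htn : ((((((i + i') % k) : ℕ) : ℤ) - (i : ℤ)) % (k : ℤ)).toNat = i' := by
        rw [mod_toNat k i _ hk0 hik hjlt, tau_sigma k i i' hk0 hik hik']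
      rw [htn, map_mul, map_mul, phi_rx_pow]
      have hexp : i + i' = (if k ≤ i + i' then 1 else 0) * k + (i + i') % k := by
        rw [addmod k i i' hk0 hik hik']
        split_ifs with h <;> omega
      set u := phi k N' N hN (∑ l ∈ Finset.range N', ca (i + l * k) • rx N' ^ l) with hu
      set v := phi k N' N hN (∑ l ∈ Finset.range N', cs (i' + l * k) • rx N' ^ l) with hv
      calc u * rx N ^ i * (v * rx N ^ i')
          = u * v * rx N ^ (i + i') := by rw [mul_mul_mul_comm, ← pow_add]
        _ = u * v * rx N ^ ((if k ≤ i + i' then 1 else 0) * k) * rx N ^ ((i + i') % k) := by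
            conv_lhs => rw [hexp]
            rw [pow_add, ← mul_assoc]
    rw [hRHS, phi_comp_sum k N' N hN cp, ← Finset.sum_mul_sum,
      phi_comp_sum k N' N hN ca, phi_comp_sum k N' N hN cs, ← ha, ← hs, hp]
  exact decomp_injective k N' N hk0 hN'0 hN _ _ hmain j hj
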